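/- Define, for θ > 0, z̃₂(θ) = 6(sinh 2θ − 2θ)²/(cosh 2θ − 1)³ and w̃₀(θ) = (sinh 2θ − 2θ)(sinh 2θ)/(cosh 2θ − 1)². Then lim_{θ→0⁺} (z̃₂(θ), w̃₀(θ)) = (4/3, 2/3) = SM₂ and lim_{θ→∞} (z̃₂(θ), w̃₀(θ)) = (0, 1) = M₂. That is, the leading-order trajectory of the pressureless k = −1 Friedmann spacetime connects the critical Friedmann rest point SM₂ (as t → 0) to the Minkowski rest point M₂ (as t → ∞). -/

import Mathlib

open Real Set Filter

/-- Leading-order density coefficient of the pressureless `k = −1` Friedmann spacetime. -/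
noncomputable def z2F (θ : ℝ) : ℝ :=
  6 * (Real.sinh (2 * θ) - 2 * θ) ^ 2 / (Real.cosh (2 * θ) - 1) ^ 3

/-- Leading-order velocity coefficient of the pressureless `k = −1` Friedmann spacetime. -/
noncomputable def w0F (θ : ℝ) : ℝ :=
  (Real.sinh (2 * θ) - 2 * θ) * Real.sinh (2 * θ) / (Real.cosh (2 * θ) - 1) ^ 2

lemma hS0 : Tendsto (fun u : ℝ => Real.sinh u / u) (nhdsWithin 0 (Ioi 0)) (nhds 1) := by
  have h := hasDerivAt_iff_tendsto_slope.mp (Real.hasDerivAt_sinh 0)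
  rw [Real.cosh_zero] at h
  have h2 : Tendsto (slope Real.sinh 0) (nhdsWithin 0 (Ioi 0)) (nhds 1) :=
    h.mono_left (nhdsWithin_mono _ (by intro x hx; exact ne_of_gt hx))
  refine h2.congr' ?_
  filter_upwards [self_mem_nhdsWithin] with u (hu : u ∈ Ioi 0)
  simp [slope_def_field]

lemma hB0 : Tendsto (fun u : ℝ => (Real.cosh u - 1) / u ^ 2) (nhdsWithin 0 (Ioi 0))
    (nhds (1 / 2)) := by
  apply HasDerivAt.lhopital_zero_nhdsGT
    (f' := fun u => Real.sinh u) (g' := fun u => 2 * u)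
  · filter_upwards with x
    simpa using (Real.hasDerivAt_cosh x).sub_const 1
  · filter_upwards with x
    simpa using hasDerivAt_pow 2 x
  · filter_upwards [self_mem_nhdsWithin] with u (hu : u ∈ Ioi 0)
    have hu' : (0 : ℝ) < u := hu
    positivity
  · have h1 : Tendsto (fun u : ℝ => Real.cosh u - 1) (nhds 0)
        (nhds (Real.cosh 0 - 1)) := (Real.continuous_cosh.tendsto 0).sub tendsto_const_nhds
    rw [Real.cosh_zero, sub_self] at h1
    exact h1.mono_left nhdsWithin_le_nhds
  · have h1 : Tendsto (fun u : ℝ => u ^ 2) (nhds 0) (nhds ((0 : ℝ) ^ 2)) :=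
      (continuous_pow 2).tendsto (0 : ℝ)
    norm_num at h1
    exact h1.mono_left nhdsWithin_le_nhds
  · have h := hS0.div_const 2
    norm_num at h
    refine h.congr fun u => ?_
    rw [div_div, mul_comm]

lemma hA0 : Tendsto (fun u : ℝ => (Real.sinh u - u) / u ^ 3) (nhdsWithin 0 (Ioi 0))
    (nhds (1 / 6)) := by
  apply HasDerivAt.lhopital_zero_nhdsGT
    (f' := fun u => Real.cosh u - 1) (g' := fun u => 3 * u ^ 2)
  · filter_upwards with x
    exact (Real.hasDerivAt_sinh x).sub (hasDerivAt_id' x)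
  · filter_upwards with x
    simpa using hasDerivAt_pow 3 x
  · filter_upwards [self_mem_nhdsWithin] with u (hu : u ∈ Ioi 0)
    have hu' : (0 : ℝ) < u := hu
    positivity
  · have h1 : Tendsto (fun u : ℝ => Real.sinh u - u) (nhds 0)
        (nhds (Real.sinh 0 - 0)) := (Real.continuous_sinh.tendsto 0).sub tendsto_id
    rw [Real.sinh_zero, sub_self] at h1
    exact h1.mono_left nhdsWithin_le_nhds
  · have h1 : Tendsto (fun u : ℝ => u ^ 3) (nhds 0) (nhds ((0 : ℝ) ^ 3)) :=
      (continuous_pow 3).tendsto (0 : ℝ)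
    norm_num at h1
    exact h1.mono_left nhdsWithin_le_nhds
  · have h := hB0.div_const 3
    norm_num at h
    refine h.congr fun u => ?_
    rw [div_div, mul_comm]

lemma htwo : Tendsto (fun θ : ℝ => 2 * θ) (nhdsWithin 0 (Ioi 0))
    (nhdsWithin 0 (Ioi 0)) := by
  apply tendsto_nhdsWithin_of_tendsto_nhds_of_eventually_within
  · have h1 : Tendsto (fun θ : ℝ => 2 * θ) (nhds 0) (nhds (2 * 0)) :=
      (continuous_const.mul continuous_id).tendsto (0 : ℝ)
    norm_num at h1
    exact h1.mono_left nhdsWithin_le_nhds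
  · filter_upwards [self_mem_nhdsWithin] with θ (hθ : θ ∈ Ioi 0)
    exact mul_pos two_pos (mem_Ioi.mp hθ)

theorem k_neg_orbit_connects_SM2_to_M2 :
    Tendsto (fun θ => (z2F θ, w0F θ)) (nhdsWithin 0 (Ioi 0))
      (nhds ((4 / 3 : ℝ), (2 / 3 : ℝ))) ∧
    Tendsto (fun θ => (z2F θ, w0F θ)) atTop (nhds ((0 : ℝ), (1 : ℝ))) := by
  have hcden : ∀ θ : ℝ, 0 < θ → Real.cosh (2 * θ) - 1 ≠ 0 := by
    intro θ hθ
    have h1 : (1 : ℝ) < Real.cosh (2 * θ) := Real.one_lt_cosh.mpr (by positivity)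
    linarith
  constructor
  · -- limit as θ → 0⁺
    have hA := hA0.comp htwo
    have hB := hB0.comp htwo
    have hS := hS0.comp htwo
    have hz : Tendsto z2F (nhdsWithin 0 (Ioi 0)) (nhds (4 / 3 : ℝ)) := by
      have h1 : Tendsto
          (fun θ : ℝ => 6 * ((Real.sinh (2 * θ) - 2 * θ) / (2 * θ) ^ 3) ^ 2 /
            (((Real.cosh (2 * θ) - 1) / (2 * θ) ^ 2) ^ 3))
          (nhdsWithin 0 (Ioi 0)) (nhds (6 * (1 / 6 : ℝ) ^ 2 / ((1 / 2 : ℝ) ^ 3))) :=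
        (tendsto_const_nhds.mul (hA.pow 2)).div (hB.pow 3) (by norm_num)
      norm_num at h1
      refine h1.congr' ?_
      filter_upwards [self_mem_nhdsWithin] with θ (hθ : θ ∈ Ioi 0)
      have hθ' : (0 : ℝ) < θ := hθ
      have hu : (2 * θ : ℝ) ≠ 0 := by positivity
      have hc := hcden θ hθ'
      simp only [z2F]
      field_simp
    have hw : Tendsto w0F (nhdsWithin 0 (Ioi 0)) (nhds (2 / 3 : ℝ)) := by
      have h1 : Tendsto
          (fun θ : ℝ => ((Real.sinh (2 * θ) - 2 * θ) / (2 * θ) ^ 3) *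
            (Real.sinh (2 * θ) / (2 * θ)) /
            (((Real.cosh (2 * θ) - 1) / (2 * θ) ^ 2) ^ 2))
          (nhdsWithin 0 (Ioi 0)) (nhds ((1 / 6 : ℝ) * 1 / ((1 / 2 : ℝ) ^ 2))) :=
        (hA.mul hS).div (hB.pow 2) (by norm_num)
      norm_num at h1
      refine h1.congr' ?_
      filter_upwards [self_mem_nhdsWithin] with θ (hθ : θ ∈ Ioi 0)
      have hθ' : (0 : ℝ) < θ := hθ
      have hu : (2 * θ : ℝ) ≠ 0 := by positivity
      have hc := hcden θ hθ'
      simp only [w0F]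
      field_simp
    exact hz.prodMk_nhds hw
  · -- limit as θ → ∞
    have he : Tendsto (fun θ : ℝ => Real.exp (-(2 * θ))) atTop (nhds 0) :=
      Real.tendsto_exp_neg_atTop_nhds_zero.comp (tendsto_id.const_mul_atTop two_pos)
    have hue : Tendsto (fun θ : ℝ => 2 * θ * Real.exp (-(2 * θ))) atTop (nhds 0) := by
      have h := (Real.tendsto_pow_mul_exp_neg_atTop_nhds_zero 1).comp
        (tendsto_id.const_mul_atTop (two_pos : (0 : ℝ) < 2))
      simpa [Function.comp_def] using h
    -- key algebraic identities
    have hsv : ∀ θ : ℝ, (1 - Real.exp (-(2 * θ)) ^ 2) / 2 =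
        Real.sinh (2 * θ) * Real.exp (-(2 * θ)) := by
      intro θ
      have hE : Real.exp (2 * θ) ≠ 0 := (Real.exp_pos _).ne'
      rw [Real.sinh_eq, Real.exp_neg]
      field_simp
    have hdv : ∀ θ : ℝ, (1 + Real.exp (-(2 * θ)) ^ 2) / 2 - Real.exp (-(2 * θ)) =
        (Real.cosh (2 * θ) - 1) * Real.exp (-(2 * θ)) := by
      intro θ
      have hE : Real.exp (2 * θ) ≠ 0 := (Real.exp_pos _).ne'
      rw [Real.cosh_eq, Real.exp_neg]
      field_simp
    have hnv : ∀ θ : ℝ, (1 - Real.exp (-(2 * θ)) ^ 2) / 2 - 2 * θ * Real.exp (-(2 * θ)) =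
        (Real.sinh (2 * θ) - 2 * θ) * Real.exp (-(2 * θ)) := by
      intro θ
      rw [hsv θ]
      ring
    have hden : Tendsto
        (fun θ : ℝ => (1 + Real.exp (-(2 * θ)) ^ 2) / 2 - Real.exp (-(2 * θ)))
        atTop (nhds (1 / 2)) := by
      have h := (((tendsto_const_nhds (x := (1:ℝ))).add (he.pow 2)).div_const 2).sub he
      norm_num at h
      exact h
    have hnum : Tendsto
        (fun θ : ℝ => (1 - Real.exp (-(2 * θ)) ^ 2) / 2 - 2 * θ * Real.exp (-(2 * θ)))
        atTop (nhds (1 / 2)) := by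
      have h := (((tendsto_const_nhds (x := (1:ℝ))).sub (he.pow 2)).div_const 2).sub hue
      norm_num at h
      exact h
    have hhalf : Tendsto (fun θ : ℝ => (1 - Real.exp (-(2 * θ)) ^ 2) / 2)
        atTop (nhds (1 / 2)) := by
      have h := ((tendsto_const_nhds (x := (1:ℝ))).sub (he.pow 2)).div_const 2
      norm_num at h
      exact h
    have hz : Tendsto z2F atTop (nhds (0 : ℝ)) := by
      have h1 : Tendsto
          (fun θ : ℝ => 6 * Real.exp (-(2 * θ)) *
            ((1 - Real.exp (-(2 * θ)) ^ 2) / 2 - 2 * θ * Real.exp (-(2 * θ))) ^ 2 /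
            ((1 + Real.exp (-(2 * θ)) ^ 2) / 2 - Real.exp (-(2 * θ))) ^ 3)
          atTop (nhds (6 * 0 * (1 / 2 : ℝ) ^ 2 / (1 / 2 : ℝ) ^ 3)) :=
        ((tendsto_const_nhds.mul he).mul (hnum.pow 2)).div (hden.pow 3) (by norm_num)
      norm_num at h1
      refine h1.congr' ?_
      filter_upwards [eventually_gt_atTop 0] with θ hθ
      have hv : Real.exp (-(2 * θ)) ≠ 0 := (Real.exp_pos _).ne'
      have hc := hcden θ hθ
      rw [hnv θ, hdv θ]
      simp only [z2F]
      field_simp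
    have hw : Tendsto w0F atTop (nhds (1 : ℝ)) := by
      have h1 : Tendsto
          (fun θ : ℝ =>
            ((1 - Real.exp (-(2 * θ)) ^ 2) / 2 - 2 * θ * Real.exp (-(2 * θ))) *
            ((1 - Real.exp (-(2 * θ)) ^ 2) / 2) /
            ((1 + Real.exp (-(2 * θ)) ^ 2) / 2 - Real.exp (-(2 * θ))) ^ 2)
          atTop (nhds ((1 / 2 : ℝ) * (1 / 2) / (1 / 2 : ℝ) ^ 2)) :=
        (hnum.mul hhalf).div (hden.pow 2) (by norm_num)
      norm_num at h1
      refine h1.congr' ?_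
      filter_upwards [eventually_gt_atTop 0] with θ hθ
      have hv : Real.exp (-(2 * θ)) ≠ 0 := (Real.exp_pos _).ne'
      have hc := hcden θ hθ
      rw [hnv θ, hsv θ, hdv θ]
      simp only [w0F]
      field_simp
    exact hz.prodMk_nhds hw
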